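/- arXiv:2410.09574 — 4 statements merged into one kernel-verified Lean document; each statement's English description precedes it below -/
import Mathlib

section
/- Let n ≥ 1 and 0 ≤ k ≤ n. Let λ be a real 2×n matrix whose columns are extended to all i ∈ ℤ by λ_{i+n} = (−1)^{k−1}·λ_i, and suppose ⟨i i+1⟩_λ > 0 for all i ∈ {1,…,n}. Let λ' be the 2×n matrix with columns λ'_i = (−1)^{i−1}·(λ_{1,i}, −λ_{2,i})ᵀ for i ∈ {1,…,n}, with columns extended by λ'_{i+n} = (−1)^{n−k−1}·λ'_i. Then ⟨i i+1⟩_{λ'} = ⟨i i+1⟩_λ for all i ∈ {1,…,n}, and wind(λ') = nπ − wind(λ). -/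
open scoped Matrix

/-- Twisted-cyclic extension of a vector `x : Fin n → ℝ` to indices in `ℤ`,
with `x_{i+n} = ε • x_i`. -/
noncomputable def vecExt {n : ℕ} (ε : ℝ) (x : Fin n → ℝ) (i : ℤ) : ℝ :=
  if h : 0 < n then
    ε ^ (i / (n : ℤ)) *
      x ⟨(i % (n : ℤ)).toNat, by
        have hn : (0 : ℤ) < (n : ℤ) := by exact_mod_cast h
        have h1 : 0 ≤ i % (n : ℤ) := Int.emod_nonneg i hn.ne'
        have h2 : i % (n : ℤ) < (n : ℤ) := Int.emod_lt_of_pos i hn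
        omega⟩
  else 0

/-- Twisted-cyclic extension of the columns of a matrix. -/
noncomputable def colExt {m n : ℕ} (ε : ℝ) (A : Matrix (Fin m) (Fin n) ℝ) (i : ℤ) :
    Fin m → ℝ :=
  fun r => vecExt ε (fun j => A r j) i

/-- The bracket `⟨i j⟩ = det(λ_i, λ_j)` of two (extended) columns of a `2 × n` matrix. -/
noncomputable def brkt {n : ℕ} (ε : ℝ) (A : Matrix (Fin 2) (Fin n) ℝ) (i j : ℤ) : ℝ :=
  colExt ε A i 0 * colExt ε A j 1 - colExt ε A i 1 * colExt ε A j 0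

/-- The sign `(-1)^(k-1)` used in the twisted cyclic symmetry. -/
noncomputable def sgn (k : ℤ) : ℝ := (-1 : ℝ) ^ (k - 1)

/-- The angle in `[0, π]` between two vectors in `ℝ²`. -/
noncomputable def ang2 (v w : Fin 2 → ℝ) : ℝ :=
  Real.arccos ((v 0 * w 0 + v 1 * w 1) /
    (Real.sqrt (v 0 ^ 2 + v 1 ^ 2) * Real.sqrt (w 0 ^ 2 + w 1 ^ 2)))

/-- The total winding angle of the columns of a `2 × n` matrix. -/
noncomputable def wind {n : ℕ} (ε : ℝ) (A : Matrix (Fin 2) (Fin n) ℝ) : ℝ :=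
  ∑ i ∈ Finset.range n, ang2 (colExt ε A (i : ℤ)) (colExt ε A ((i : ℤ) + 1))

/-- The set `λ⁺_{k,n}`. -/
noncomputable def lamPlus (n : ℕ) (k : ℤ) (A : Matrix (Fin 2) (Fin n) ℝ) : Prop :=
  (∀ i ∈ Finset.range n, 0 < brkt (sgn k) A (i : ℤ) ((i : ℤ) + 1)) ∧
  wind (sgn k) A = ((k : ℝ) - 1) * Real.pi

/-- The set `λ̃⁺_{k,n}`. -/
noncomputable def latPlus (n : ℕ) (k : ℤ) (A : Matrix (Fin 2) (Fin n) ℝ) : Prop :=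
  (∀ i ∈ Finset.range n, 0 < brkt (sgn k) A (i : ℤ) ((i : ℤ) + 1)) ∧
  wind (sgn k) A = ((k : ℝ) + 1) * Real.pi

/-- The set `λλ̃⁺_{k,n}` of pairs with momentum conservation. -/
noncomputable def lamlatPlus (n : ℕ) (k : ℤ) (lam lat : Matrix (Fin 2) (Fin n) ℝ) : Prop :=
  lamPlus n k lam ∧ latPlus n k lat ∧ lam * lat.transpose = 0

/-- The row span of a matrix, as a submodule of `ℝⁿ`. -/
def rowSpan {m n : ℕ} (A : Matrix (Fin m) (Fin n) ℝ) : Submodule ℝ (Fin n → ℝ) :=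
  Submodule.span ℝ (Set.range fun i => A i)

/-- All maximal minors are nonnegative. -/
def nonnegMinors {k n : ℕ} (C : Matrix (Fin k) (Fin n) ℝ) : Prop :=
  ∀ f : Fin k → Fin n, StrictMono f → 0 ≤ (C.submatrix id f).det

/-- All maximal minors are positive. -/
def posMinors {k n : ℕ} (C : Matrix (Fin k) (Fin n) ℝ) : Prop :=
  ∀ f : Fin k → Fin n, StrictMono f → 0 < (C.submatrix id f).det

/-- `C` represents a point of the totally nonnegative Grassmannian `Gr_{≥0}(k,n)`. -/
def GrNonneg {k n : ℕ} (C : Matrix (Fin k) (Fin n) ℝ) : Prop :=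
  C.rank = k ∧ nonnegMinors C

/-- `C` represents a point of the totally positive Grassmannian `Gr_{>0}(k,n)`. -/
def GrPos {k n : ℕ} (C : Matrix (Fin k) (Fin n) ℝ) : Prop :=
  C.rank = k ∧ posMinors C

/-- `alt` negates every second column. -/
def altM {m n : ℕ} (A : Matrix (Fin m) (Fin n) ℝ) : Matrix (Fin m) (Fin n) ℝ :=
  Matrix.of fun i j => (-1 : ℝ) ^ (j : ℕ) * A i j

/-- `(2,0)`-nondegeneracy: consecutive columns are linearly independent. -/
def Nondeg20 (n : ℕ) (k : ℤ) {m : ℕ} (C : Matrix (Fin m) (Fin n) ℝ) : Prop :=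
  ∀ i : ℤ, LinearIndependent ℝ ![colExt (sgn k) C i, colExt (sgn k) C (i + 1)]

/-- `(0,2)`-nondegeneracy: `C_i ∈ span(C_{i+1}, …, C_{i+n-2})`. -/
def Nondeg02 (n : ℕ) (k : ℤ) {m : ℕ} (C : Matrix (Fin m) (Fin n) ℝ) : Prop :=
  ∀ i : ℤ, colExt (sgn k) C i ∈
    Submodule.span ℝ ((fun t : ℤ => colExt (sgn k) C t) '' Set.Icc (i + 1) (i + (n : ℤ) - 2))

/-- Connectedness of a matrix: no cyclic splitting of the columns into a direct sum. -/
def ConnMat (n : ℕ) (k : ℤ) {m : ℕ} (C : Matrix (Fin m) (Fin n) ℝ) : Prop :=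
  ¬ ∃ i j : ℤ, i < j ∧ j < i + (n : ℤ) ∧
    IsCompl (Submodule.span ℝ ((fun t : ℤ => colExt (sgn k) C t) '' Set.Icc i (j - 1)))
      (Submodule.span ℝ ((fun t : ℤ => colExt (sgn k) C t) '' Set.Icc j (i + (n : ℤ) - 1)))

/-- `C` represents a point of `Gr_{≥2}(k,n)`: totally nonnegative, connected,
and 2-nondegenerate. -/
def GrGe2 (n k : ℕ) (C : Matrix (Fin k) (Fin n) ℝ) : Prop :=
  GrNonneg C ∧ Nondeg20 n (k : ℤ) C ∧ Nondeg02 n (k : ℤ) C ∧ ConnMat n (k : ℤ) C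

/-- The orthogonal complement of a subspace of `ℝⁿ` with respect to the dot product. -/
noncomputable def perpSub {n : ℕ} (U : Submodule ℝ (Fin n → ℝ)) : Submodule ℝ (Fin n → ℝ) where
  carrier := {v | ∀ u ∈ U, dotProduct v u = 0}
  zero_mem' := fun u _ => zero_dotProduct u
  add_mem' := fun {a b} ha hb u hu => by
    rw [add_dotProduct, ha u hu, hb u hu, add_zero]
  smul_mem' := fun c v hv u hu => by
    rw [smul_dotProduct, hv u hu, smul_zero]

/-- The planar Mandelstam variables. -/
noncomputable def Mand {n : ℕ} (ε : ℝ) (lam lat : Matrix (Fin 2) (Fin n) ℝ) (i j : ℤ) : ℝ :=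
  ∑ p ∈ Finset.Ioc i j, ∑ q ∈ Finset.Ioc p j, brkt ε lam p q * brkt ε lat p q

/-- `Q` is the magic projector `Q_λ`: it is determined by its action on row vectors
(extended twisted-cyclically with sign `εx`, the brackets of `lam` using sign `εl`). -/
def IsQmat {n : ℕ} (εx εl : ℝ) (lam : Matrix (Fin 2) (Fin n) ℝ)
    (Q : Matrix (Fin n) (Fin n) ℝ) : Prop :=
  ∀ (x : Fin n → ℝ) (b : Fin n),
    Matrix.vecMul x Q b =
      (vecExt εx x (((b : ℕ) : ℤ) - 1) * brkt εl lam ((b : ℕ) : ℤ) (((b : ℕ) : ℤ) + 1)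
        + vecExt εx x ((b : ℕ) : ℤ) * brkt εl lam (((b : ℕ) : ℤ) + 1) (((b : ℕ) : ℤ) - 1)
        + vecExt εx x (((b : ℕ) : ℤ) + 1) * brkt εl lam (((b : ℕ) : ℤ) - 1) ((b : ℕ) : ℤ))
      / (brkt εl lam (((b : ℕ) : ℤ) - 1) ((b : ℕ) : ℤ) *
          brkt εl lam ((b : ℕ) : ℤ) (((b : ℕ) : ℤ) + 1))

/-- The coefficients `t^λ_i`. -/
noncomputable def tcoef {n : ℕ} (ε : ℝ) (lam : Matrix (Fin 2) (Fin n) ℝ) (j : ℤ) : ℝ :=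
  brkt ε lam (j + 1) (j - 1) / (brkt ε lam (j - 1) j * brkt ε lam j (j + 1))

/-- The involution `Θ` on `2 × n` matrices. -/
noncomputable def Theta {n : ℕ} (ε : ℝ) (lam : Matrix (Fin 2) (Fin n) ℝ) :
    Matrix (Fin 2) (Fin n) ℝ :=
  Matrix.of fun r j =>
    (-1 : ℝ) ^ (j : ℕ) * tcoef ε lam ((j : ℕ) : ℤ) * (if r = 0 then lam 0 j else -(lam 1 j))

/-- The Minkowski bilinear form on `ℝ^{2,2} ≅ ℂ²`. -/
noncomputable def minkDot (P Q : ℂ × ℂ) : ℝ :=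
  (P.1 * (starRingEnd ℂ) Q.1 - P.2 * (starRingEnd ℂ) Q.2).re

lemma vecExt_coe {n : ℕ} (ε : ℝ) (x : Fin n → ℝ) (i : ℕ) (h : i < n) :
    vecExt ε x (i : ℤ) = x ⟨i, h⟩ := by
  have hn : 0 < n := lt_of_le_of_lt (Nat.zero_le i) h
  have hni : (0:ℤ) < (n:ℤ) := by exact_mod_cast hn
  have hdiv : (i : ℤ) / (n : ℤ) = 0 :=
    Int.ediv_eq_zero_of_lt (by positivity) (by exact_mod_cast h)
  have hmod : (i : ℤ) % (n : ℤ) = (i : ℤ) :=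
    Int.emod_eq_of_lt (by positivity) (by exact_mod_cast h)
  simp only [vecExt, dif_pos hn, hdiv, hmod, zpow_zero, one_mul, Int.toNat_natCast]

lemma vecExt_top {n : ℕ} (ε : ℝ) (x : Fin n → ℝ) (hn : 0 < n) :
    vecExt ε x (n : ℤ) = ε * x ⟨0, hn⟩ := by
  have hne : (n : ℤ) ≠ 0 := by exact_mod_cast hn.ne'
  have hdiv : (n : ℤ) / (n : ℤ) = 1 := Int.ediv_self hne
  have hmod : (n : ℤ) % (n : ℤ) = 0 := Int.emod_self
  simp only [vecExt, dif_pos hn, hdiv, hmod, zpow_one, Int.toNat_zero]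

lemma sgn_mul_sgn (n k : ℤ) : sgn (n - k) * sgn k = (-1 : ℝ) ^ n := by
  unfold sgn
  rw [← zpow_add₀ (by norm_num : (-1:ℝ) ≠ 0)]
  have h : n - k - 1 + (k - 1) = n - 2 := by ring
  rw [h, zpow_sub₀ (by norm_num : (-1:ℝ) ≠ 0)]
  norm_num

lemma sgn_sq (k : ℤ) : sgn k * sgn k = 1 := by
  unfold sgn
  rw [← zpow_add₀ (by norm_num : (-1:ℝ) ≠ 0)]
  have h : Even (k - 1 + (k - 1)) := ⟨k - 1, by ring⟩
  exact h.neg_one_zpow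

lemma ang2_flip (v w v' w' : Fin 2 → ℝ) (a : ℝ) (ha : a * a = 1)
    (hv0 : v' 0 = a * v 0) (hv1 : v' 1 = a * (-(v 1)))
    (hw0 : w' 0 = (-a) * w 0) (hw1 : w' 1 = (-a) * (-(w 1))) :
    ang2 v' w' = Real.pi - ang2 v w := by
  unfold ang2
  rw [hv0, hv1, hw0, hw1]
  have h1 : (a * v 0) ^ 2 + (a * -(v 1)) ^ 2 = v 0 ^ 2 + v 1 ^ 2 := by
    linear_combination (v 0 ^ 2 + v 1 ^ 2) * ha
  have h2 : (-a * w 0) ^ 2 + (-a * -(w 1)) ^ 2 = w 0 ^ 2 + w 1 ^ 2 := by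
    linear_combination (w 0 ^ 2 + w 1 ^ 2) * ha
  have h3 : a * v 0 * (-a * w 0) + a * -(v 1) * (-a * -(w 1)) =
      -(v 0 * w 0 + v 1 * w 1) := by
    linear_combination (-(v 0 * w 0) - v 1 * w 1) * ha
  rw [h1, h2, h3, neg_div, Real.arccos_neg]

/-- Lemma on `alt` and winding: if `λ` has positive consecutive
brackets (with twisted sign `(-1)^(k-1)`), and `λ'` is obtained from `alt(λ)` by
negating the second row (with twisted sign `(-1)^(n-k-1)`), then the consecutive
brackets agree and `wind(λ') = nπ - wind(λ)`. -/
theorem stmt0 (n k : ℕ) (hn : 1 ≤ n) (hk : k ≤ n)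
    (lam : Matrix (Fin 2) (Fin n) ℝ)
    (hpos : ∀ i ∈ Finset.range n, 0 < brkt (sgn (k : ℤ)) lam (i : ℤ) ((i : ℤ) + 1))
    (lam' : Matrix (Fin 2) (Fin n) ℝ)
    (hlam' : ∀ j : Fin n, lam' 0 j = (-1 : ℝ) ^ (j : ℕ) * lam 0 j ∧
      lam' 1 j = (-1 : ℝ) ^ (j : ℕ) * (-(lam 1 j))) :
    (∀ i ∈ Finset.range n,
      brkt (sgn ((n : ℤ) - (k : ℤ))) lam' (i : ℤ) ((i : ℤ) + 1) =
        brkt (sgn (k : ℤ)) lam (i : ℤ) ((i : ℤ) + 1)) ∧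
    wind (sgn ((n : ℤ) - (k : ℤ))) lam' = (n : ℝ) * Real.pi - wind (sgn (k : ℤ)) lam := by
  have hn0 : 0 < n := hn
  set ε : ℝ := sgn (k : ℤ) with hε
  set ε' : ℝ := sgn ((n : ℤ) - (k : ℤ)) with hε'
  have hεsq : ε * ε = 1 := sgn_sq _
  have hε'ε : ε' * ε = (-1 : ℝ) ^ n := by
    rw [hε, hε', sgn_mul_sgn, zpow_natCast]
  have hε'eq : ε' = (-1 : ℝ) ^ n * ε := by
    have := congrArg (· * ε) hε'ε
    calc ε' = ε' * (ε * ε) := by rw [hεsq, mul_one]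
      _ = (ε' * ε) * ε := by ring
      _ = (-1 : ℝ) ^ n * ε := by rw [hε'ε]
  -- the key componentwise comparison
  have key : ∀ i : ℕ, i ≤ n →
      colExt ε' lam' (i : ℤ) 0 = (-1 : ℝ) ^ i * colExt ε lam (i : ℤ) 0 ∧
      colExt ε' lam' (i : ℤ) 1 = (-1 : ℝ) ^ i * (-(colExt ε lam (i : ℤ) 1)) := by
    intro i hi
    rcases lt_or_eq_of_le hi with hlt | heq
    · have h0 := (hlam' ⟨i, hlt⟩).1
      have h1 := (hlam' ⟨i, hlt⟩).2
      have e0' : colExt ε' lam' (i : ℤ) 0 = lam' 0 ⟨i, hlt⟩ :=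
        vecExt_coe ε' (fun j => lam' 0 j) i hlt
      have e1' : colExt ε' lam' (i : ℤ) 1 = lam' 1 ⟨i, hlt⟩ :=
        vecExt_coe ε' (fun j => lam' 1 j) i hlt
      have e0 : colExt ε lam (i : ℤ) 0 = lam 0 ⟨i, hlt⟩ :=
        vecExt_coe ε (fun j => lam 0 j) i hlt
      have e1 : colExt ε lam (i : ℤ) 1 = lam 1 ⟨i, hlt⟩ :=
        vecExt_coe ε (fun j => lam 1 j) i hlt
      rw [e0', e1', e0, e1, h0, h1]
      exact ⟨rfl, by ring⟩
    · subst heq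
      have h0 := (hlam' ⟨0, hn0⟩).1
      have h1 := (hlam' ⟨0, hn0⟩).2
      simp only [Fin.val_mk, pow_zero, one_mul] at h0 h1
      have e0' : colExt ε' lam' (i : ℤ) 0 = ε' * lam' 0 ⟨0, hn0⟩ :=
        vecExt_top ε' (fun j => lam' 0 j) hn0
      have e1' : colExt ε' lam' (i : ℤ) 1 = ε' * lam' 1 ⟨0, hn0⟩ :=
        vecExt_top ε' (fun j => lam' 1 j) hn0
      have e0 : colExt ε lam (i : ℤ) 0 = ε * lam 0 ⟨0, hn0⟩ :=
        vecExt_top ε (fun j => lam 0 j) hn0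
      have e1 : colExt ε lam (i : ℤ) 1 = ε * lam 1 ⟨0, hn0⟩ :=
        vecExt_top ε (fun j => lam 1 j) hn0
      rw [e0', e1', e0, e1, h0, h1, hε'eq]
      exact ⟨by ring, by ring⟩
  have hpow : ∀ i : ℕ, ((-1 : ℝ) ^ i) * ((-1 : ℝ) ^ i) = 1 := by
    intro i
    rw [← pow_add]
    exact Even.neg_one_pow ⟨i, rfl⟩
  constructor
  · intro i hi
    rw [Finset.mem_range] at hi
    obtain ⟨hv0, hv1⟩ := key i (le_of_lt hi)
    obtain ⟨hw0, hw1⟩ := key (i + 1) hi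
    have hc : ((i : ℤ) + 1) = ((i + 1 : ℕ) : ℤ) := by push_cast; ring
    unfold brkt
    rw [hc, hv0, hv1, hw0, hw1, pow_succ]
    linear_combination (colExt ε lam (i : ℤ) 0 * colExt ε lam ((i+1 : ℕ) : ℤ) 1
      - colExt ε lam (i : ℤ) 1 * colExt ε lam ((i+1 : ℕ) : ℤ) 0) * hpow i
  · unfold wind
    have hterm : ∀ i ∈ Finset.range n,
        ang2 (colExt ε' lam' (i : ℤ)) (colExt ε' lam' ((i : ℤ) + 1)) =
        Real.pi - ang2 (colExt ε lam (i : ℤ)) (colExt ε lam ((i : ℤ) + 1)) := by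
      intro i hi
      rw [Finset.mem_range] at hi
      obtain ⟨hv0, hv1⟩ := key i (le_of_lt hi)
      obtain ⟨hw0, hw1⟩ := key (i + 1) hi
      have hc : ((i : ℤ) + 1) = ((i + 1 : ℕ) : ℤ) := by push_cast; ring
      rw [hc]
      refine ang2_flip _ _ _ _ ((-1 : ℝ) ^ i) (hpow i) hv0 hv1 ?_ ?_
      · rw [hw0, pow_succ]; ring
      · rw [hw1, pow_succ]; ring
    rw [Finset.sum_congr rfl hterm, Finset.sum_sub_distrib, Finset.sum_const,
      Finset.card_range, nsmul_eq_mul]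
end

section
/- Let 2 ≤ k ≤ n−2, let α := (k−1)π/n ∈ (0,π), and let λ be the 2×n matrix with columns λ_i = (cos(iα), sin(iα))ᵀ for i ∈ {1,…,n} (then λ_{i+n} = (−1)^{k−1}·λ_i and ⟨i i+1⟩_λ = sin(α) > 0). Then Q_λ = −(2cos(α)/sin(α))·1_n + (1/sin(α))·(σ_k + σ_k^{−1}), where 1_n is the n×n identity matrix and σ_k is the n×n matrix of the twisted cyclic shift, i.e. x·σ_k = ((−1)^{k−1}x_n, x_1, …, x_{n−1}) for row vectors x ∈ ℝⁿ. -/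
open scoped Matrix

lemma vecExt_eq_of {n : ℕ} (hn : 0 < n) (ε : ℝ) (x : Fin n → ℝ) {i q : ℤ} {r : Fin n}
    (h : i = (n : ℤ) * q + ((r : ℕ) : ℤ)) : vecExt ε x i = ε ^ q * x r := by
  have hb : (0:ℤ) < n := by exact_mod_cast hn
  have hr0 : (0:ℤ) ≤ ((r:ℕ):ℤ) := Int.natCast_nonneg _
  have hrn : ((r:ℕ):ℤ) < (n:ℤ) := by exact_mod_cast r.isLt
  have hdm := (Int.ediv_emod_unique (a := i) (b := (n:ℤ)) (q := q) (r := ((r:ℕ):ℤ)) hb).mpr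
    ⟨by omega, hr0, hrn⟩
  simp only [vecExt, dif_pos hn, hdm.1, hdm.2]
  congr 1

/-- for the cyclically symmetric `λ` with columns
`λ_i = (cos(iα), sin(iα))`, `α = (k-1)π/n`, the magic projector is
`Q_λ = -(2cos α/sin α)·1 + (1/sin α)(σ_k + σ_k⁻¹)`. -/
theorem stmt9 (n k : ℕ) (hk2 : 2 ≤ k) (hkn : k + 2 ≤ n)
    (α : ℝ) (hα : α = ((k : ℝ) - 1) * Real.pi / n)
    (lam : Matrix (Fin 2) (Fin n) ℝ)
    (hlam : ∀ j : Fin n, lam 0 j = Real.cos (((j : ℕ) + 1) * α) ∧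
      lam 1 j = Real.sin (((j : ℕ) + 1) * α))
    (S : Matrix (Fin n) (Fin n) ℝ)
    (hS : ∀ (x : Fin n → ℝ) (b : Fin n),
      Matrix.vecMul x S b =
        if (b : ℕ) = 0 then (-1 : ℝ) ^ (k - 1) * x ⟨n - 1, by omega⟩
        else x ⟨(b : ℕ) - 1, by have := b.isLt; omega⟩)
    (Q : Matrix (Fin n) (Fin n) ℝ) (hQ : IsQmat (sgn (k : ℤ)) (sgn (k : ℤ)) lam Q) :
    Q = (-(2 * Real.cos α / Real.sin α)) • (1 : Matrix (Fin n) (Fin n) ℝ)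
      + (Real.sin α)⁻¹ • (S + S⁻¹) := by
  have hn : 0 < n := by omega
  have hπ := Real.pi_pos
  have hk1 : (2:ℝ) ≤ (k:ℝ) := by exact_mod_cast hk2
  have hknR : (k:ℝ) + 2 ≤ (n:ℝ) := by exact_mod_cast hkn
  have hnR : (0:ℝ) < (n:ℝ) := by exact_mod_cast hn
  have hnα : (n:ℝ) * α = ((k:ℝ) - 1) * Real.pi := by
    rw [hα]; field_simp
  set ε : ℝ := sgn (k:ℤ) with hεdef
  have hε : ε = (-1:ℝ) ^ ((k:ℤ) - 1) := by rw [hεdef]; rfl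
  have hεnat : ε = (-1:ℝ) ^ (k - 1) := by
    rw [hε, show ((k:ℤ) - 1) = ((k-1:ℕ):ℤ) by omega, zpow_natCast]
  have hεsq : ε * ε = 1 := by
    rw [hεnat, ← pow_add, Even.neg_one_pow ⟨k-1, rfl⟩]
  have hεi : ε⁻¹ = ε := (eq_inv_of_mul_eq_one_left hεsq).symm
  -- column formula
  have hcol : ∀ (i : ℤ) (r : Fin 2), colExt ε lam i r =
      if r = 0 then Real.cos (((i:ℝ)+1)*α) else Real.sin (((i:ℝ)+1)*α) := by
    intro i r
    have hb : (0:ℤ) < n := by exact_mod_cast hn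
    have h1 : 0 ≤ i % (n:ℤ) := Int.emod_nonneg i hb.ne'
    have h2 : i % (n:ℤ) < (n:ℤ) := Int.emod_lt_of_pos i hb
    set q := i / (n:ℤ) with hq
    set rr : Fin n := ⟨(i % (n:ℤ)).toNat, by omega⟩ with hrr
    have hrrv : ((rr:ℕ):ℤ) = i % (n:ℤ) := by
      simp [hrr, Int.toNat_of_nonneg h1]
    have hi : i = (n:ℤ) * q + ((rr:ℕ):ℤ) := by
      rw [hrrv, hq]; exact (Int.mul_ediv_add_emod i (n:ℤ)).symm
    have hx : colExt ε lam i r = ε ^ q * lam r rr := by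
      simp only [colExt]
      exact vecExt_eq_of hn ε (fun j => lam r j) hi
    have hiR : (i:ℝ) = (n:ℝ)*(q:ℝ) + ((rr:ℕ):ℝ) := by exact_mod_cast hi
    have hir : ((i:ℝ)+1)*α = (((rr:ℕ):ℝ)+1)*α + ((q*((k:ℤ)-1) : ℤ):ℝ) * Real.pi := by
      push_cast
      linear_combination α * hiR + (q:ℝ) * hnα
    have hεq : ε ^ q = (-1:ℝ) ^ (q * ((k:ℤ)-1)) := by
      rw [hε, ← zpow_mul, mul_comm]
    by_cases hr : r = 0
    · subst hr
      rw [hx, if_pos rfl, (hlam rr).1, hir, Real.cos_add_int_mul_pi, hεq]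
    · have hr1 : r = 1 := by
        have := r.isLt
        rw [Fin.ext_iff] at hr ⊢
        omega
      subst hr1
      rw [hx, if_neg hr, (hlam rr).2, hir, Real.sin_add_int_mul_pi, hεq]
  -- bracket formula
  have hbr : ∀ i j : ℤ, brkt ε lam i j = Real.sin (((j:ℝ) - (i:ℝ)) * α) := by
    intro i j
    have c0 : ∀ t : ℤ, colExt ε lam t 0 = Real.cos (((t:ℝ)+1)*α) := by
      intro t; rw [hcol, if_pos rfl]
    have c1 : ∀ t : ℤ, colExt ε lam t 1 = Real.sin (((t:ℝ)+1)*α) := by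
      intro t; rw [hcol, if_neg (by decide)]
    simp only [brkt, c0, c1]
    rw [show ((j:ℝ) - (i:ℝ)) * α = ((j:ℝ)+1)*α - ((i:ℝ)+1)*α by ring, Real.sin_sub]
    ring
  have hbr1 : ∀ i : ℤ, brkt ε lam i (i+1) = Real.sin α := by
    intro i; rw [hbr, show (((i+1:ℤ)):ℝ) - ((i:ℤ):ℝ) = 1 by push_cast; ring, one_mul]
  have hbr1' : ∀ i : ℤ, brkt ε lam (i-1) i = Real.sin α := by
    intro i; rw [hbr, show ((i:ℤ):ℝ) - (((i-1:ℤ)):ℝ) = 1 by push_cast; ring, one_mul]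
  have hbr2 : ∀ i : ℤ, brkt ε lam (i+1) (i-1) = -(2 * Real.sin α * Real.cos α) := by
    intro i
    rw [hbr, show ((((i-1:ℤ)):ℝ) - (((i+1:ℤ)):ℝ)) * α = -(2*α) by push_cast; ring,
      Real.sin_neg, Real.sin_two_mul]
  -- sin α > 0
  have hsin : 0 < Real.sin α := by
    apply Real.sin_pos_of_pos_of_lt_pi
    · rw [hα]
      exact div_pos (mul_pos (by linarith) hπ) hnR
    · rw [hα, div_lt_iff₀ hnR]
      nlinarith
  have hsinne : Real.sin α ≠ 0 := hsin.ne'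
  -- the inverse shift matrix
  set T : Matrix (Fin n) (Fin n) ℝ := Matrix.of (fun a b : Fin n =>
    if (a:ℕ) = 0 then (if (b:ℕ) = n - 1 then ε else 0)
    else (if (b:ℕ) = (a:ℕ) - 1 then 1 else 0)) with hT
  have hTab : ∀ a b : Fin n, T a b =
      if (a:ℕ) = 0 then (if (b:ℕ) = n - 1 then ε else 0)
      else (if (b:ℕ) = (a:ℕ) - 1 then 1 else 0) := fun a b => rfl
  have hSab : ∀ a b : Fin n, S a b =
      if (b:ℕ) = 0 then (if (a:ℕ) = n-1 then ε else 0)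
      else (if (a:ℕ) = (b:ℕ) - 1 then 1 else 0) := by
    intro a b
    have h := hS (Pi.single a 1) b
    rw [Matrix.single_one_vecMul, Matrix.row_apply] at h
    rw [h, ← hεnat]
    by_cases hb0 : (b:ℕ) = 0
    · rw [if_pos hb0, if_pos hb0, Pi.single_apply]
      by_cases ha : (a:ℕ) = n - 1
      · rw [if_pos ha, if_pos (Fin.ext (by simp [ha])), mul_one]
      · rw [if_neg ha, if_neg (fun hc => ha (by
          have := congrArg Fin.val hc; simp at this; omega)), mul_zero]
    · rw [if_neg hb0, if_neg hb0, Pi.single_apply]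
      by_cases ha : (a:ℕ) = (b:ℕ) - 1
      · rw [if_pos ha, if_pos (Fin.ext (by simp [ha]))]
      · rw [if_neg ha, if_neg (fun hc => ha (by
          have := congrArg Fin.val hc; simp at this; omega))]
  -- T is a left inverse of S
  have hTS : T * S = 1 := by
    ext a c
    have hmul : (T * S) a c = Matrix.vecMul (T a) S c := by
      simp [Matrix.mul_apply, Matrix.vecMul, dotProduct]
    rw [hmul, hS (T a) c, ← hεnat, Matrix.one_apply]
    by_cases hc : (c:ℕ) = 0
    · rw [if_pos hc, hTab]
      by_cases ha : (a:ℕ) = 0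
      · rw [if_pos ha, if_pos (by simp), if_pos (Fin.ext (by simp [ha, hc])), hεsq]
      · rw [if_neg ha, if_neg (by have := a.isLt; simp; omega),
          if_neg (fun hac => ha (by rw [hac, hc])), mul_zero]
    · rw [if_neg hc, hTab]
      by_cases ha : (a:ℕ) = 0
      · rw [if_pos ha, if_neg (by have := c.isLt; simp; omega),
          if_neg (fun hac => hc (by rw [← hac, ha]))]
      · rw [if_neg ha]
        by_cases hac : a = c
        · rw [if_pos (by simp [hac]), if_pos hac]
        · rw [if_neg (by
            simp only [Fin.ext_iff] at hac ⊢
            have := a.isLt; have := c.isLt; simp; omega), if_neg hac]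
  have hSinv : S⁻¹ = T := Matrix.inv_eq_left_inv hTS
  -- vecExt of basis vectors
  have hveδ : ∀ a b : Fin n, vecExt ε (Pi.single a 1) (((b:ℕ):ℤ)) =
      if a = b then 1 else 0 := by
    intro a b
    rw [vecExt_eq_of hn ε (Pi.single a 1) (q := 0) (r := b) (by omega), zpow_zero, one_mul,
      Pi.single_apply]
    exact if_congr eq_comm rfl rfl
  have hveS : ∀ a b : Fin n, vecExt ε (Pi.single a 1) (((b:ℕ):ℤ) - 1) = S a b := by
    intro a b
    rw [hSab]
    by_cases hb0 : (b:ℕ) = 0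
    · rw [vecExt_eq_of hn ε (Pi.single a 1) (q := -1) (r := ⟨n-1, by omega⟩) (by simp; omega),
        if_pos hb0, zpow_neg_one, hεi, Pi.single_apply]
      by_cases ha : (a:ℕ) = n - 1
      · rw [if_pos (Fin.ext (by simp [ha])), if_pos ha, mul_one]
      · rw [if_neg (fun hc => ha (by
          have := congrArg Fin.val hc; simp at this; omega)), if_neg ha, mul_zero]
    · rw [vecExt_eq_of hn ε (Pi.single a 1)
        (q := 0) (r := ⟨(b:ℕ) - 1, by have := b.isLt; omega⟩) (by simp; omega),
        zpow_zero, one_mul, if_neg hb0, Pi.single_apply]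
      by_cases ha : (a:ℕ) = (b:ℕ) - 1
      · rw [if_pos (Fin.ext (by simp [ha])), if_pos ha]
      · rw [if_neg (fun hc => ha (by
          have := congrArg Fin.val hc; simp at this; omega)), if_neg ha]
  have hveT : ∀ a b : Fin n, vecExt ε (Pi.single a 1) (((b:ℕ):ℤ) + 1) = T a b := by
    intro a b
    rw [hTab]
    by_cases hbn : (b:ℕ) = n - 1
    · rw [vecExt_eq_of hn ε (Pi.single a 1) (q := 1) (r := ⟨0, hn⟩) (by simp; omega),
        zpow_one, Pi.single_apply]
      by_cases ha : (a:ℕ) = 0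
      · rw [if_pos (Fin.ext (by simp [ha])), if_pos ha, if_pos hbn, mul_one]
      · rw [if_neg (fun hc => ha (by
          have := congrArg Fin.val hc; simp at this; omega)), if_neg ha,
          if_neg (by have := a.isLt; omega), mul_zero]
    · rw [vecExt_eq_of hn ε (Pi.single a 1)
        (q := 0) (r := ⟨(b:ℕ) + 1, by have := b.isLt; omega⟩) (by simp),
        zpow_zero, one_mul, Pi.single_apply]
      by_cases ha : (a:ℕ) = 0
      · rw [if_pos ha, if_neg hbn,
          if_neg (fun hc => by have := congrArg Fin.val hc; simp [ha] at this)]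
      · rw [if_neg ha]
        by_cases hab : (b:ℕ) = (a:ℕ) - 1
        · rw [if_pos (Fin.ext (by simp; omega)), if_pos hab]
        · rw [if_neg (fun hc => hab (by
            have := congrArg Fin.val hc; simp at this; omega)), if_neg hab]
  -- conclude entrywise
  ext a b
  have h := hQ (Pi.single a 1) b
  rw [Matrix.single_one_vecMul, Matrix.row_apply] at h
  rw [h, hveS a b, hveδ a b, hveT a b, hbr1, hbr1', hbr2,
    Matrix.add_apply, Matrix.smul_apply, Matrix.smul_apply, hSinv,
    Matrix.add_apply, Matrix.one_apply, smul_eq_mul, smul_eq_mul]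
  by_cases hab : a = b
  · rw [if_pos hab]
    field_simp
    ring
  · rw [if_neg hab]
    field_simp
    ring
end

section
/- Let i < j be integers and let y_{i+1},…,y_j and ỹ_{i+1},…,ỹ_j be complex numbers. For each s set λ_s := (Re y_s, Im y_s) ∈ ℝ² and λ̃_s := (Re ỹ_s, −Im ỹ_s) ∈ ℝ². Then |Σ_{s=i+1}^{j} y_s·ỹ_s|² − |Σ_{s=i+1}^{j} conj(y_s)·ỹ_s|² = 4·Σ_{i<p<q≤j} det(λ_p, λ_q)·det(λ̃_p, λ̃_q). (Equivalently: the Minkowski square of the sum of the null bispinors P_s = (y_sỹ_s, conj(y_s)ỹ_s) equals four times the corresponding Mandelstam variable; this is the identity 4·Mand_{i,j}(λ,λ̃) = |T(i)−T(j)|² − |O(i)−O(j)|² relating Mandelstam variables to the t-embedding and origami boundary polygons, whose successive differences are y_sỹ_s and conj(y_s)ỹ_s.) -/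
open scoped Matrix

private def gfun (y yt : ℤ → ℂ) (p q : ℤ) : ℝ :=
  ((y p).re * (y q).im - (y p).im * (y q).re) *
    ((yt p).re * (-(yt q).im) - (-(yt p).im) * (yt q).re)

private lemma ptwise (y yt : ℤ → ℂ) (p a : ℤ) :
    2 * (y p * yt p * (starRingEnd ℂ) (y a * yt a)).re
      - 2 * ((starRingEnd ℂ) (y p) * yt p *
          (starRingEnd ℂ) ((starRingEnd ℂ) (y a) * yt a)).re
    = 4 * gfun y yt p a := by
  simp [gfun, Complex.mul_re, Complex.mul_im]
  ring

private lemma key (y yt : ℤ → ℂ) (S : Finset ℤ) :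
    ‖∑ s ∈ S, y s * yt s‖ ^ 2
      - ‖∑ s ∈ S, (starRingEnd ℂ) (y s) * yt s‖ ^ 2
    = 4 * ∑ p ∈ S, ∑ q ∈ S.filter (p < ·), gfun y yt p q := by
  induction S using Finset.induction_on_max with
  | empty => simp
  | insert a S ha ih =>
    have haS : a ∉ S := fun h => lt_irrefl a (ha a h)
    rw [Finset.sum_insert haS, Finset.sum_insert haS, Finset.sum_insert haS]
    rw [Complex.sq_norm, Complex.sq_norm, Complex.normSq_add, Complex.normSq_add]
    rw [Complex.sq_norm, Complex.sq_norm] at ih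
    have hnorm : Complex.normSq (y a * yt a)
        = Complex.normSq ((starRingEnd ℂ) (y a) * yt a) := by
      simp [Complex.normSq_mul]
    have hfa : (insert a S).filter (a < ·) = ∅ := by
      apply Finset.filter_false_of_mem
      intro x hx
      rcases Finset.mem_insert.mp hx with h | h
      · simp [h]
      · exact not_lt_of_gt (ha x h)
    have hR : ∑ p ∈ S, ∑ q ∈ (insert a S).filter (p < ·), gfun y yt p q
        = ∑ p ∈ S, (gfun y yt p a + ∑ q ∈ S.filter (p < ·), gfun y yt p q) := by
      refine Finset.sum_congr rfl fun p hp => ?_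
      rw [Finset.filter_insert, if_pos (ha p hp),
        Finset.sum_insert (fun h => haS (Finset.mem_of_mem_filter a h))]
    rw [hfa, hR, Finset.sum_add_distrib]
    have hmain : (∑ s ∈ S, y s * yt s) * (starRingEnd ℂ) (y a * yt a)
        = ∑ p ∈ S, y p * yt p * (starRingEnd ℂ) (y a * yt a) := by
      rw [Finset.sum_mul]
    have hmain' : (∑ s ∈ S, (starRingEnd ℂ) (y s) * yt s) *
          (starRingEnd ℂ) ((starRingEnd ℂ) (y a) * yt a)
        = ∑ p ∈ S, (starRingEnd ℂ) (y p) * yt p *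
            (starRingEnd ℂ) ((starRingEnd ℂ) (y a) * yt a) := by
      rw [Finset.sum_mul]
    have hsum : 2 * ((∑ s ∈ S, y s * yt s) * (starRingEnd ℂ) (y a * yt a)).re
        - 2 * ((∑ s ∈ S, (starRingEnd ℂ) (y s) * yt s) *
            (starRingEnd ℂ) ((starRingEnd ℂ) (y a) * yt a)).re
        = 4 * ∑ p ∈ S, gfun y yt p a := by
      rw [hmain, hmain', Complex.re_sum, Complex.re_sum, Finset.mul_sum, Finset.mul_sum,
        Finset.mul_sum, ← Finset.sum_sub_distrib]
      exact Finset.sum_congr rfl fun p _ => ptwise y yt p a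
    have hc : ∀ z w : ℂ, (z * (starRingEnd ℂ) w).re = (w * (starRingEnd ℂ) z).re := by
      intro z w; simp [Complex.mul_re]; ring
    rw [Finset.sum_empty, hc (y a * yt a), hc ((starRingEnd ℂ) (y a) * yt a)]
    linarith [ih, hsum, hnorm]

/-- the Minkowski square of a sum of null bispinors equals four
times the corresponding Mandelstam variable:
`|Σ y_s ỹ_s|² - |Σ conj(y_s) ỹ_s|² = 4 Σ_{i<p<q≤j} det(λ_p,λ_q)·det(λ̃_p,λ̃_q)`. -/
theorem stmt12 (i j : ℤ) (hij : i < j) (y yt : ℤ → ℂ) :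
    ‖∑ s ∈ Finset.Ioc i j, y s * yt s‖ ^ 2
      - ‖∑ s ∈ Finset.Ioc i j, (starRingEnd ℂ) (y s) * yt s‖ ^ 2
    = 4 * ∑ p ∈ Finset.Ioc i j, ∑ q ∈ Finset.Ioc p j,
        ((y p).re * (y q).im - (y p).im * (y q).re) *
        ((yt p).re * (-(yt q).im) - (-(yt p).im) * (yt q).re) := by
  rw [key y yt (Finset.Ioc i j)]
  refine congrArg (4 * ·) (Finset.sum_congr rfl fun p hp => ?_)
  have hp' := Finset.mem_Ioc.mp hp
  have : Finset.Ioc p j = (Finset.Ioc i j).filter (p < ·) := by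
    ext q
    simp only [Finset.mem_Ioc, Finset.mem_filter]
    omega
  rw [this]
  rfl
end

section
/- Let n ≥ 4 and let P_1,…,P_n ∈ ℂ² satisfy: each P_i is null (|P_i^T| = |P_i^O|), P_1 + P_2 + ⋯ + P_n = 0, P_i·P_{i+1} > 0 for all i ∈ {1,…,n} (indices modulo n, so P_{n+1} = P_1), and Σ_{i=1}^{n} arg(P_{i+1}^T / P_i^T) = −2π, where each argument lies in (−π,π) (the T-components are nonzero and no ratio is a negative real, since P_i·P_{i+1} > 0). Then there exists a unique integer k with 2 ≤ k ≤ n−2 for which (P_1,…,P_n) is the null polygon associated with some pair (λ, λ̃) ∈ λλ̃⁺_{k,n}. -/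
open scoped Matrix

open Complex in
private lemma aux_arg_pos {z : ℂ} (h : 0 < z.im) : 0 < z.arg :=
  lt_of_le_of_ne (Complex.arg_nonneg_iff.2 h.le) fun h0 =>
    absurd (Complex.arg_eq_zero_iff.mp h0.symm).2 h.ne'

private lemma aux_arg_lt_pi {z : ℂ} (h : 0 < z.im) : z.arg < Real.pi :=
  Complex.arg_lt_pi_iff.2 (Or.inr h.ne')

private lemma colExt_nat {n : ℕ} (ε : ℝ) (A : Matrix (Fin 2) (Fin n) ℝ) {i : ℕ} (h : i < n) :
    colExt ε A (i : ℤ) = fun r => A r ⟨i, h⟩ := by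
  funext r
  have hn : 0 < n := lt_of_le_of_lt (Nat.zero_le _) h
  have h1 : (i : ℤ) / (n : ℤ) = 0 := Int.ediv_eq_zero_of_lt (by positivity) (by exact_mod_cast h)
  have h2 : (i : ℤ) % (n : ℤ) = (i : ℤ) := Int.emod_eq_of_lt (by positivity) (by exact_mod_cast h)
  simp only [colExt, vecExt, dif_pos hn, h1, h2, zpow_zero, one_mul, Int.toNat_natCast]

private lemma colExt_n {n : ℕ} (hn : 0 < n) (ε : ℝ) (A : Matrix (Fin 2) (Fin n) ℝ) :
    colExt ε A (n : ℤ) = fun r => ε * A r ⟨0, hn⟩ := by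
  funext r
  have hne : (n : ℤ) ≠ 0 := by exact_mod_cast hn.ne'
  simp only [colExt, vecExt, dif_pos hn, Int.ediv_self hne, Int.emod_self, zpow_one, Int.toNat_zero]

/-- the complex number attached to column `j`. -/
private def cnum {n : ℕ} (A : Matrix (Fin 2) (Fin n) ℝ) (j : Fin n) : ℂ :=
  ⟨A 0 j, A 1 j⟩

private lemma brkt_eq {n : ℕ} (ε : ℝ) (A : Matrix (Fin 2) (Fin n) ℝ) {i : ℕ}
    (h1 : i < n) (h2 : i + 1 < n) :
    brkt ε A (i : ℤ) ((i : ℤ) + 1) =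
      ((starRingEnd ℂ) (cnum A ⟨i, h1⟩) * cnum A ⟨i + 1, h2⟩).im := by
  have hc : ((i : ℤ) + 1) = ((i + 1 : ℕ) : ℤ) := by push_cast; ring
  rw [brkt, hc, colExt_nat ε A h1, colExt_nat ε A h2]
  simp [cnum, Complex.mul_im]
  ring

private lemma brkt_last {n : ℕ} (hn : 0 < n) (ε : ℝ) (A : Matrix (Fin 2) (Fin n) ℝ) :
    brkt ε A ((n - 1 : ℕ) : ℤ) (((n - 1 : ℕ) : ℤ) + 1) =
      ε * ((starRingEnd ℂ) (cnum A ⟨n - 1, by omega⟩) * cnum A ⟨0, hn⟩).im := by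
  have hc : (((n - 1 : ℕ) : ℤ) + 1) = (n : ℤ) := by omega
  rw [brkt, hc, colExt_nat ε A (by omega : n - 1 < n), colExt_n hn ε A]
  simp [cnum, Complex.mul_im]
  ring
private lemma div_im_pos {z w : ℂ} (hz : z ≠ 0) (him : 0 < ((starRingEnd ℂ) z * w).im) :
    0 < (w / z).im := by
  have hnz : 0 < Complex.normSq z := Complex.normSq_pos.2 hz
  have : (w / z).im = ((starRingEnd ℂ) z * w).im / Complex.normSq z := by
    rw [Complex.div_im, Complex.mul_im]
    simp [Complex.conj_re, Complex.conj_im]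
    ring
  rw [this]
  positivity

private lemma ang2_eq_arg (v w : Fin 2 → ℝ) (z z' : ℂ) (hzv : z = ⟨v 0, v 1⟩)
    (hzw : z' = ⟨w 0, w 1⟩) (hz : z ≠ 0) (hz' : z' ≠ 0)
    (him : 0 < ((starRingEnd ℂ) z * z').im) :
    ang2 v w = (z' / z).arg := by
  have him' : 0 < (z' / z).im := div_im_pos hz him
  rw [Complex.arg_of_im_pos him', ang2]
  have h0 : ‖z‖ ≠ 0 := norm_ne_zero_iff.mpr hz
  have h0' : ‖z'‖ ≠ 0 := norm_ne_zero_iff.mpr hz'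
  have hns : Complex.normSq z = ‖z‖ * ‖z‖ := by
    rw [← Complex.sq_norm]; ring
  congr 1
  rw [norm_div, Complex.div_re, hns]
  subst hzv hzw
  have habz : Real.sqrt (v 0 ^ 2 + v 1 ^ 2) = ‖(⟨v 0, v 1⟩ : ℂ)‖ := by
    rw [Complex.norm_def, Complex.normSq_mk]; ring_nf
  have habw : Real.sqrt (w 0 ^ 2 + w 1 ^ 2) = ‖(⟨w 0, w 1⟩ : ℂ)‖ := by
    rw [Complex.norm_def, Complex.normSq_mk]; ring_nf
  rw [habz, habw] at *
  field_simp
private lemma arg_telescope (F : ℕ → ℂ) (m : ℕ) (hF : ∀ j, j ≤ m → F j ≠ 0) :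
    ((∑ i ∈ Finset.range m, (F (i + 1) / F i).arg : ℝ) : Real.Angle) =
      ((F m / F 0).arg : Real.Angle) := by
  induction m with
  | zero =>
    rw [Finset.sum_range_zero, div_self (hF 0 le_rfl), Complex.arg_one]
  | succ m ih =>
    rw [Finset.sum_range_succ, Real.Angle.coe_add,
      ih (fun j hj => hF j (hj.trans (Nat.le_succ m)))]
    rw [Complex.arg_div_coe_angle (hF m (Nat.le_succ m)) (hF 0 (Nat.zero_le _)),
      Complex.arg_div_coe_angle (hF (m + 1) le_rfl) (hF m (Nat.le_succ m)),
      Complex.arg_div_coe_angle (hF (m + 1) le_rfl) (hF 0 (Nat.zero_le _))]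
    abel

private lemma mink_eq {y y' T O T' O' : ℂ} (hy : y ≠ 0) (hy' : y' ≠ 0)
    (h1 : (starRingEnd ℂ) y * T = O * y) (h2 : (starRingEnd ℂ) y' * T' = O' * y') :
    minkDot (T, O) (T', O') =
      2 * ((starRingEnd ℂ) y * y').im * ((T / y) * (starRingEnd ℂ) (T' / y')).im := by
  have ha : T = y * (T / y) := by field_simp
  have ha' : T' = y' * (T' / y') := by field_simp
  set a := T / y with hadef
  set a' := T' / y' with hadef'
  have hO : O = (starRingEnd ℂ) y * a := by
    apply mul_right_cancel₀ hy
    rw [← h1, ha]; ring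
  have hO' : O' = (starRingEnd ℂ) y' * a' := by
    apply mul_right_cancel₀ hy'
    rw [← h2, ha']; ring
  rw [minkDot, ha, ha', hO, hO']
  simp only [Complex.mul_re, Complex.mul_im, Complex.sub_re, Complex.conj_re, Complex.conj_im,
    map_mul]
  ring

private lemma rep_prop {T O : ℂ} (hO : O ≠ 0) (habs : ‖T‖ = ‖O‖) :
    (starRingEnd ℂ) (Complex.exp ((((T / O).arg / 2 : ℝ) : ℂ) * Complex.I)) * T =
      O * Complex.exp ((((T / O).arg / 2 : ℝ) : ℂ) * Complex.I) := by
  set θ : ℝ := (T / O).arg / 2 with hθ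
  set zr := Complex.exp ((θ : ℂ) * Complex.I) with hzr
  have key : Complex.exp (((T / O).arg : ℝ) * Complex.I) = T / O := by
    have h1 : ‖T / O‖ = 1 := by
      rw [norm_div, habs, div_self (norm_ne_zero_iff.mpr hO)]
    have h2 := Complex.norm_mul_exp_arg_mul_I (T / O)
    rwa [h1, Complex.ofReal_one, one_mul] at h2
  have hadd : (θ : ℂ) * Complex.I + (θ : ℂ) * Complex.I
      = (((T / O).arg : ℝ) : ℂ) * Complex.I := by
    rw [hθ]; push_cast; ring
  have hsq : zr * zr = T / O := by
    rw [hzr, ← Complex.exp_add, hadd, key]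
  have hconj : (starRingEnd ℂ) zr * zr = 1 := by
    rw [hzr, ← Complex.exp_conj]
    rw [map_mul, Complex.conj_ofReal, Complex.conj_I, ← Complex.exp_add]
    simp
  calc (starRingEnd ℂ) zr * T = (starRingEnd ℂ) zr * (O * (zr * zr)) := by
        rw [hsq]; field_simp
    _ = O * (((starRingEnd ℂ) zr * zr) * zr) := by ring
    _ = O * zr := by rw [hconj, one_mul]
private lemma sgn_pm (k : ℤ) : sgn k = 1 ∨ sgn k = -1 := by
  rcases Int.even_or_odd (k - 1) with ⟨t, ht⟩ | ⟨t, ht⟩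
  · left
    rw [sgn, ht, ← two_mul, zpow_mul]
    norm_num
  · right
    rw [sgn, ht, zpow_add₀ (by norm_num : (-1 : ℝ) ≠ 0), zpow_mul]
    norm_num

private lemma exists_m {x ε : ℝ} (hε : ε = 1 ∨ ε = -1) (hx0 : 0 < x)
    (hang : (x : Real.Angle) = ((Complex.arg ((ε : ℝ) : ℂ) : ℝ) : Real.Angle)) :
    ∃ m : ℤ, 0 < m ∧ x = (m : ℝ) * Real.pi ∧ (-1 : ℝ) ^ m = ε := by
  have hpi : (0 : ℝ) < Real.pi := Real.pi_pos
  rcases hε with rfl | rfl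
  · rw [show (((1 : ℝ) : ℂ)) = 1 by norm_num, Complex.arg_one] at hang
    obtain ⟨t, ht⟩ := Real.Angle.angle_eq_iff_two_pi_dvd_sub.mp hang
    refine ⟨2 * t, ?_, ?_, ?_⟩
    · have : x = (2 * t : ℤ) * Real.pi := by push_cast; linarith
      by_contra h
      push_neg at h
      have : ((2 * t : ℤ) : ℝ) * Real.pi ≤ 0 := by
        apply mul_nonpos_of_nonpos_of_nonneg _ hpi.le
        exact_mod_cast (by omega : (2 * t : ℤ) ≤ 0)
      linarith [this, ‹x = ((2 * t : ℤ) : ℝ) * Real.pi›]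
    · push_cast; linarith
    · rw [zpow_mul]; norm_num
  · rw [show (((-1 : ℝ) : ℂ)) = -1 by norm_num, Complex.arg_neg_one] at hang
    obtain ⟨t, ht⟩ := Real.Angle.angle_eq_iff_two_pi_dvd_sub.mp hang
    refine ⟨2 * t + 1, ?_, ?_, ?_⟩
    · have hx : x = ((2 * t + 1 : ℤ) : ℝ) * Real.pi := by push_cast; linarith
      by_contra h
      push_neg at h
      have : ((2 * t + 1 : ℤ) : ℝ) * Real.pi ≤ 0 := by
        apply mul_nonpos_of_nonpos_of_nonneg _ hpi.le
        exact_mod_cast (by omega : (2 * t + 1 : ℤ) ≤ 0)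
      linarith
    · push_cast; linarith
    · rw [zpow_add₀ (by norm_num : (-1 : ℝ) ≠ 0), zpow_mul]; norm_num

private lemma angle_coe_inj {a b : ℝ} (ha1 : -Real.pi < a) (ha2 : a ≤ Real.pi)
    (hb1 : -Real.pi < b) (hb2 : b ≤ Real.pi) (h : (a : Real.Angle) = (b : Real.Angle)) :
    a = b := by
  obtain ⟨t, ht⟩ := Real.Angle.angle_eq_iff_two_pi_dvd_sub.mp h
  have hpi : (0 : ℝ) < Real.pi := Real.pi_pos
  have h1 : -2 * Real.pi < 2 * Real.pi * t := by rw [← ht]; linarith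
  have h2 : 2 * Real.pi * t < 2 * Real.pi := by rw [← ht]; linarith
  have ht0 : t = 0 := by
    by_contra h0
    rcases lt_or_gt_of_ne h0 with h0 | h0
    · have : (t : ℝ) ≤ -1 := by exact_mod_cast (by omega : t ≤ -1)
      nlinarith
    · have : (1 : ℝ) ≤ t := by exact_mod_cast (by omega : 1 ≤ t)
      nlinarith
  rw [ht0] at ht
  push_cast at ht
  linarith

private lemma arg_sub_arg {z z' w w' Tz Tz' : ℂ} (hz : z ≠ 0) (hz' : z' ≠ 0)
    (hw : w ≠ 0) (hw' : w' ≠ 0)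
    (hT : Tz = z * (starRingEnd ℂ) w) (hT' : Tz' = z' * (starRingEnd ℂ) w')
    (ha1 : 0 < (z' / z).arg) (ha2 : (z' / z).arg < Real.pi)
    (hb1 : 0 < (w' / w).arg) (hb2 : (w' / w).arg < Real.pi) :
    (Tz' / Tz).arg = (z' / z).arg - (w' / w).arg := by
  have hcw : (starRingEnd ℂ) w ≠ 0 := by simpa using hw
  have hcw' : (starRingEnd ℂ) w' ≠ 0 := by simpa using hw'
  have hTz : Tz ≠ 0 := by rw [hT]; exact mul_ne_zero hz hcw
  have hratio : Tz' / Tz = (z' / z) * (starRingEnd ℂ) (w' / w) := by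
    rw [hT, hT', map_div₀]
    field_simp
  have hang : ((Tz' / Tz).arg : Real.Angle)
      = (((z' / z).arg - (w' / w).arg : ℝ) : Real.Angle) := by
    rw [hratio, Complex.arg_mul_coe_angle (div_ne_zero hz' hz)
      (by simpa using div_ne_zero hw' hw), Complex.arg_conj_coe_angle]
    rw [Real.Angle.coe_sub]
    abel
  have hpi : (0 : ℝ) < Real.pi := Real.pi_pos
  exact angle_coe_inj (Complex.neg_pi_lt_arg _) (Complex.arg_le_pi _)
    (by linarith) (by linarith) hang

private lemma ratio_real {y y' T O : ℂ} (hy : y ≠ 0) (hy' : y' ≠ 0) (hT : T ≠ 0)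
    (h1 : (starRingEnd ℂ) y * T = O * y) (h2 : (starRingEnd ℂ) y' * T = O * y') :
    ∃ c : ℝ, c ≠ 0 ∧ y' = (c : ℂ) * y := by
  have key : (starRingEnd ℂ) y' * y = (starRingEnd ℂ) y * y' := by
    have h3 : (starRingEnd ℂ) y' * T * y = O * y * y' := by rw [h2]; ring
    rw [← h1] at h3
    have h4 : T * ((starRingEnd ℂ) y' * y - (starRingEnd ℂ) y * y') = 0 := by
      rw [mul_sub]; linear_combination h3
    rcases mul_eq_zero.mp h4 with h | h
    · exact absurd h hT
    · exact sub_eq_zero.mp h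
  have hq : (starRingEnd ℂ) (y' / y) = y' / y := by
    rw [map_div₀]
    rw [div_eq_div_iff (by simpa using hy) hy]
    linear_combination key
  obtain ⟨c, hc⟩ := Complex.conj_eq_iff_real.mp hq
  refine ⟨c, ?_, ?_⟩
  · intro h0
    rw [h0] at hc
    simp at hc
    tauto
  · field_simp at hc
    linear_combination hc
private lemma real_mul_mk (r a b : ℝ) : ((r : ℝ) : ℂ) * ⟨a, b⟩ = ⟨r * a, r * b⟩ := by
  apply Complex.ext <;> simp [Complex.mul_re, Complex.mul_im]

private lemma im_real_mul (r : ℝ) (a b : ℂ) :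
    ((starRingEnd ℂ) a * (((r : ℝ) : ℂ) * b)).im = r * ((starRingEnd ℂ) a * b).im := by
  rw [show (starRingEnd ℂ) a * (((r : ℝ) : ℂ) * b) = ((r : ℝ) : ℂ) * ((starRingEnd ℂ) a * b)
    by ring]
  simp [Complex.mul_im]

/-- extended column sequence -/
private noncomputable def Gf (n : ℕ) (ε : ℝ) (W : ℕ → ℂ) (j : ℕ) : ℂ :=
  if j < n then W j else ((ε : ℝ) : ℂ) * W 0

private lemma windEq {n : ℕ} (hn : 2 ≤ n) {ε : ℝ} (hε : ε = 1 ∨ ε = -1)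
    (A : Matrix (Fin 2) (Fin n) ℝ) (W : ℕ → ℂ)
    (hWA : ∀ (j : ℕ) (h : j < n), cnum A ⟨j, h⟩ = W j)
    (hp1 : ∀ j, j + 1 < n → 0 < ((starRingEnd ℂ) (W j) * W (j + 1)).im)
    (hp2 : 0 < ((starRingEnd ℂ) (W (n - 1)) * (((ε : ℝ) : ℂ) * W 0)).im) :
    (∀ j < n, W j ≠ 0) ∧
    (∀ i ∈ Finset.range n, 0 < brkt ε A (i : ℤ) ((i : ℤ) + 1)) ∧
    (wind ε A = ∑ i ∈ Finset.range n, (Gf n ε W (i + 1) / Gf n ε W i).arg) ∧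
    (∀ i < n, 0 < (Gf n ε W (i + 1) / Gf n ε W i).arg ∧
        (Gf n ε W (i + 1) / Gf n ε W i).arg < Real.pi) ∧
    ((wind ε A : ℝ) : Real.Angle) = ((Complex.arg ((ε : ℝ) : ℂ) : ℝ) : Real.Angle) := by
  have hn0 : 0 < n := by omega
  have hεC : ((ε : ℝ) : ℂ) ≠ 0 := by
    rcases hε with rfl | rfl <;> norm_num
  have hWne : ∀ j < n, W j ≠ 0 := by
    intro j hj h0
    rcases Nat.lt_or_ge (j + 1) n with hj1 | hj1
    · have h := hp1 j hj1
      rw [h0] at h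
      simp at h
    · have hh := hp2
      rw [show n - 1 = j by omega, h0] at hh
      simp at hh
  have hW0 : W 0 ≠ 0 := hWne 0 hn0
  have hG : ∀ j ≤ n, Gf n ε W j ≠ 0 := by
    intro j hj
    rw [Gf]
    split
    · exact hWne j (by assumption)
    · exact mul_ne_zero hεC hW0
  have hGpos : ∀ i < n, 0 < ((starRingEnd ℂ) (Gf n ε W i) * Gf n ε W (i + 1)).im := by
    intro i hi
    rcases Nat.lt_or_ge (i + 1) n with hi1 | hi1
    · rw [Gf, Gf, if_pos hi, if_pos hi1]
      exact hp1 i hi1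
    · have he : i = n - 1 := by omega
      rw [Gf, Gf, if_pos hi, if_neg (by omega : ¬ i + 1 < n), he]
      exact hp2
  have harg : ∀ i < n, 0 < (Gf n ε W (i + 1) / Gf n ε W i).arg ∧
      (Gf n ε W (i + 1) / Gf n ε W i).arg < Real.pi := by
    intro i hi
    have him := div_im_pos (hG i hi.le) (hGpos i hi)
    exact ⟨aux_arg_pos him, aux_arg_lt_pi him⟩
  have hbr : ∀ i ∈ Finset.range n, 0 < brkt ε A (i : ℤ) ((i : ℤ) + 1) := by
    intro i hi
    rw [Finset.mem_range] at hi
    rcases Nat.lt_or_ge (i + 1) n with hi1 | hi1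
    · rw [brkt_eq ε A hi hi1, hWA i hi, hWA (i + 1) hi1]
      exact hp1 i hi1
    · have he : i = n - 1 := by omega
      subst he
      rw [brkt_last hn0 ε A, hWA (n - 1) (by omega), hWA 0 hn0]
      rw [im_real_mul] at hp2
      exact hp2
  have hwind : wind ε A = ∑ i ∈ Finset.range n, (Gf n ε W (i + 1) / Gf n ε W i).arg := by
    rw [wind]
    apply Finset.sum_congr rfl
    intro i hi
    rw [Finset.mem_range] at hi
    rcases Nat.lt_or_ge (i + 1) n with hi1 | hi1
    · rw [colExt_nat ε A hi, show ((i : ℤ) + 1) = ((i + 1 : ℕ) : ℤ) by push_cast; ring,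
        colExt_nat ε A hi1, Gf, Gf, if_pos hi, if_pos hi1]
      exact ang2_eq_arg _ _ (W i) (W (i + 1))
        (by rw [← hWA i hi]; rfl) (by rw [← hWA (i + 1) hi1]; rfl)
        (hWne i hi) (hWne (i + 1) hi1) (hp1 i hi1)
    · have he : i = n - 1 := by omega
      subst he
      have h2 : colExt ε A (((n - 1 : ℕ) : ℤ) + 1) = fun r => ε * A r ⟨0, hn0⟩ := by
        rw [show (((n - 1 : ℕ) : ℤ) + 1) = (n : ℤ) by omega]
        exact colExt_n hn0 ε A
      rw [colExt_nat ε A (by omega : n - 1 < n), h2,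
        Gf, Gf, if_pos (by omega : n - 1 < n), if_neg (by omega : ¬ n - 1 + 1 < n)]
      exact ang2_eq_arg _ _ (W (n - 1)) (((ε : ℝ) : ℂ) * W 0)
        (by rw [← hWA (n - 1) (by omega)]; rfl)
        (by rw [← hWA 0 hn0, cnum, real_mul_mk])
        (hWne (n - 1) (by omega)) (mul_ne_zero hεC hW0) hp2
  refine ⟨hWne, hbr, hwind, harg, ?_⟩
  rw [hwind, arg_telescope (Gf n ε W) n (fun j hj => hG j hj)]
  congr 1
  rw [Gf, Gf, if_neg (lt_irrefl n), if_pos hn0,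
    mul_div_assoc, div_self hW0, mul_one]

set_option maxHeartbeats 2000000 in
/-- a null polygon with positive consecutive Minkowski products
and total winding `-2π` of its `T`-components is the null polygon associated with
some `(λ, λ̃) ∈ λλ̃⁺_{k,n}` for a unique `k` with `2 ≤ k ≤ n-2`. -/
theorem stmt13 (n : ℕ) (hn : 4 ≤ n) (P : ℤ → ℂ × ℂ)
    (hper : ∀ i : ℤ, P (i + n) = P i)
    (hnull : ∀ i : ℤ, ‖(P i).1‖ = ‖(P i).2‖)
    (hsum : ∑ i ∈ Finset.range n, P (i : ℤ) = 0)
    (hpos : ∀ i ∈ Finset.range n, 0 < minkDot (P (i : ℤ)) (P ((i : ℤ) + 1)))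
    (hwind : ∑ i ∈ Finset.range n, Complex.arg ((P ((i : ℤ) + 1)).1 / (P (i : ℤ)).1)
      = -(2 * Real.pi)) :
    ∃! k : ℕ, 2 ≤ k ∧ k ≤ n - 2 ∧
      ∃ lam lat : Matrix (Fin 2) (Fin n) ℝ, lamlatPlus n (k : ℤ) lam lat ∧
        ∀ j : Fin n, P ((j : ℕ) : ℤ) =
          ((lam 0 j + lam 1 j * Complex.I) * (lat 0 j - lat 1 j * Complex.I),
            (starRingEnd ℂ) (lam 0 j + lam 1 j * Complex.I) *
              (lat 0 j - lat 1 j * Complex.I)) := by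
  have hn0 : 0 < n := by omega
  have hpi : (0 : ℝ) < Real.pi := Real.pi_pos
  -- nonvanishing of the components
  have hPT : ∀ i < n, (P (i : ℤ)).1 ≠ 0 ∧ (P (i : ℤ)).2 ≠ 0 := by
    intro i hi
    have hp := hpos i (Finset.mem_range.2 hi)
    constructor
    · intro h0
      have h2 : (P (i : ℤ)).2 = 0 := by
        have h := hnull (i : ℤ); rw [h0] at h; simpa using h.symm
      rw [minkDot, h0, h2] at hp; simp at hp
    · intro h0
      have h1 : (P (i : ℤ)).1 = 0 := by
        have h := hnull (i : ℤ); rw [h0] at h; simpa using h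
      rw [minkDot, h0, h1] at hp; simp at hp
  -- the unimodular representatives
  set z : ℕ → ℂ := fun j =>
    Complex.exp (((((P (j : ℤ)).1 / (P (j : ℤ)).2).arg / 2 : ℝ) : ℂ) * Complex.I) with hzdef
  have hzne : ∀ j, z j ≠ 0 := fun j => Complex.exp_ne_zero _
  have hrep : ∀ j < n, (starRingEnd ℂ) (z j) * (P (j : ℤ)).1 = (P (j : ℤ)).2 * z j :=
    fun j hj => rep_prop (hPT j hj).2 (hnull (j : ℤ))
  -- sign-corrected representatives
  set Y : ℕ → ℂ := fun j => Nat.rec (z 0) (fun j Yj =>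
    if 0 < ((starRingEnd ℂ) Yj * z (j + 1)).im then z (j + 1) else -z (j + 1)) j with hYdef
  have hYsucc : ∀ j, Y (j + 1) = if 0 < ((starRingEnd ℂ) (Y j) * z (j + 1)).im
      then z (j + 1) else -z (j + 1) := fun j => rfl
  have hYpm : ∀ j, Y j = z j ∨ Y j = -z j := by
    intro j
    cases j with
    | zero => exact Or.inl rfl
    | succ j => rw [hYsucc]; split <;> [exact Or.inl rfl; exact Or.inr rfl]
  have hYne : ∀ j, Y j ≠ 0 := by
    intro j
    rcases hYpm j with h | h <;> rw [h] <;> simp [hzne j]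
  have hrepY : ∀ j < n, (starRingEnd ℂ) (Y j) * (P (j : ℤ)).1 = (P (j : ℤ)).2 * Y j := by
    intro j hj
    rcases hYpm j with h | h <;> rw [h]
    · exact hrep j hj
    · rw [map_neg]; linear_combination -(hrep j hj)
  -- Minkowski products via the representatives
  set ty : ℕ → ℂ := fun j => (P (j : ℤ)).1 / Y j with htydef
  have htyne : ∀ j < n, ty j ≠ 0 := fun j hj => div_ne_zero (hPT j hj).1 (hYne j)
  have hMk : ∀ j, j + 1 < n → minkDot (P (j : ℤ)) (P ((j + 1 : ℕ) : ℤ)) =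
      2 * ((starRingEnd ℂ) (Y j) * Y (j + 1)).im * (ty j * (starRingEnd ℂ) (ty (j + 1))).im :=
    fun j hj => mink_eq (hYne j) (hYne (j + 1)) (hrepY j (by omega)) (hrepY (j + 1) hj)
  have hposN : ∀ j, j + 1 < n → 0 < minkDot (P (j : ℤ)) (P ((j + 1 : ℕ) : ℤ)) := by
    intro j hj
    have h := hpos j (Finset.mem_range.2 (by omega))
    rwa [show ((j : ℤ) + 1) = ((j + 1 : ℕ) : ℤ) by push_cast; ring] at h
  have hposW : 0 < minkDot (P ((n - 1 : ℕ) : ℤ)) (P ((0 : ℕ) : ℤ)) := by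
    have h := hpos (n - 1) (Finset.mem_range.2 (by omega))
    rwa [show (((n - 1 : ℕ) : ℤ) + 1) = ((0 : ℤ) + (n : ℕ)) by omega, hper 0] at h
  have hMkW : minkDot (P ((n - 1 : ℕ) : ℤ)) (P ((0 : ℕ) : ℤ)) =
      2 * ((starRingEnd ℂ) (Y (n - 1)) * Y 0).im * (ty (n - 1) * (starRingEnd ℂ) (ty 0)).im :=
    mink_eq (hYne (n - 1)) (hYne 0) (hrepY (n - 1) (by omega)) (hrepY 0 hn0)
  -- positivity of the lambda brackets
  have hΔne : ∀ j, j + 1 < n → ((starRingEnd ℂ) (Y j) * Y (j + 1)).im ≠ 0 := by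
    intro j hj h0
    have h1 := hposN j hj
    rw [hMk j hj, h0] at h1
    simp at h1
  have hΔpos : ∀ j, j + 1 < n → 0 < ((starRingEnd ℂ) (Y j) * Y (j + 1)).im := by
    intro j hj
    have hne := hΔne j hj
    rw [hYsucc j] at hne ⊢
    split_ifs at hne ⊢ with h
    · exact h
    · rw [not_lt] at h
      simp only [mul_neg, Complex.neg_im] at hne ⊢
      rcases lt_or_eq_of_le h with h' | h'
      · linarith
      · exact absurd (by linarith) hne
  have hΔt : ∀ j, j + 1 < n → 0 < (ty j * (starRingEnd ℂ) (ty (j + 1))).im := by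
    intro j hj
    have h1 := hposN j hj
    rw [hMk j hj] at h1
    nlinarith [hΔpos j hj]
  -- the twist sign
  set σ : ℝ := ((starRingEnd ℂ) (Y (n - 1)) * Y 0).im with hσdef
  have hσne : σ ≠ 0 := by
    intro h0
    have h1 := hposW
    rw [hMkW, h0] at h1
    simp at h1
  set ε : ℝ := if 0 < σ then 1 else -1 with hεdef
  have hε : ε = 1 ∨ ε = -1 := by
    rw [hεdef]; split_ifs <;> simp
  have hεσ : 0 < ε * σ := by
    rw [hεdef]; split_ifs with h
    · simpa using h
    · rw [not_lt] at h
      have : σ < 0 := lt_of_le_of_ne h hσne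
      nlinarith
  have hεp2 : 0 < ((starRingEnd ℂ) (Y (n - 1)) * (((ε : ℝ) : ℂ) * Y 0)).im := by
    rw [im_real_mul]; exact hεσ
  have hεε : ε * ε = 1 := by rcases hε with h | h <;> rw [h] <;> norm_num
  have hσt : 0 < ε * (ty (n - 1) * (starRingEnd ℂ) (ty 0)).im := by
    have h1 := hposW
    rw [hMkW] at h1
    nlinarith [hεσ, mul_pos hεσ h1]
  -- the tilde representatives
  set Yt : ℕ → ℂ := fun j => (starRingEnd ℂ) (ty j) with hYtdef
  have hp1T : ∀ j, j + 1 < n → 0 < ((starRingEnd ℂ) (Yt j) * Yt (j + 1)).im := by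
    intro j hj
    have : (starRingEnd ℂ) (Yt j) * Yt (j + 1) = ty j * (starRingEnd ℂ) (ty (j + 1)) := by
      rw [hYtdef]; simp
    rw [this]; exact hΔt j hj
  have hp2T : 0 < ((starRingEnd ℂ) (Yt (n - 1)) * (((ε : ℝ) : ℂ) * Yt 0)).im := by
    rw [im_real_mul]
    have : (starRingEnd ℂ) (Yt (n - 1)) * Yt 0 = ty (n - 1) * (starRingEnd ℂ) (ty 0) := by
      rw [hYtdef]; simp
    rw [this]; exact hσt
  -- the matrices
  set lam : Matrix (Fin 2) (Fin n) ℝ :=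
    Matrix.of fun r (j : Fin n) => if r = 0 then (Y (j : ℕ)).re else (Y (j : ℕ)).im with hlamdef
  set lat : Matrix (Fin 2) (Fin n) ℝ :=
    Matrix.of fun r (j : Fin n) => if r = 0 then (Yt (j : ℕ)).re else (Yt (j : ℕ)).im with hlatdef
  have hWAlam : ∀ (j : ℕ) (h : j < n), cnum lam ⟨j, h⟩ = Y j := by
    intro j h
    apply Complex.ext
    · show (if (0 : Fin 2) = 0 then (Y j).re else (Y j).im) = (Y j).re
      rw [if_pos rfl]
    · show (if (1 : Fin 2) = 0 then (Y j).re else (Y j).im) = (Y j).im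
      rw [if_neg (by decide)]
  have hWAlat : ∀ (j : ℕ) (h : j < n), cnum lat ⟨j, h⟩ = Yt j := by
    intro j h
    apply Complex.ext
    · show (if (0 : Fin 2) = 0 then (Yt j).re else (Yt j).im) = (Yt j).re
      rw [if_pos rfl]
    · show (if (1 : Fin 2) = 0 then (Yt j).re else (Yt j).im) = (Yt j).im
      rw [if_neg (by decide)]
  obtain ⟨hWneL, hbrL, hwindL, hargL, hangL⟩ := windEq (by omega) hε lam Y hWAlam hΔpos hεp2
  obtain ⟨hWneT, hbrT, hwindT, hargT, hangT⟩ := windEq (by omega) hε lat Yt hWAlat hp1T hp2T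
  -- extract the integers m, mt
  have hx0 : 0 < wind ε lam := by
    rw [hwindL]
    exact Finset.sum_pos (fun i hi => (hargL i (Finset.mem_range.1 hi)).1)
      ⟨0, Finset.mem_range.2 hn0⟩
  have hxt0 : 0 < wind ε lat := by
    rw [hwindT]
    exact Finset.sum_pos (fun i hi => (hargT i (Finset.mem_range.1 hi)).1)
      ⟨0, Finset.mem_range.2 hn0⟩
  obtain ⟨m, hm0, hmx, hmε⟩ := exists_m hε hx0 hangL
  obtain ⟨mt, hmt0, hmtx, hmtε⟩ := exists_m hε hxt0 hangT
  -- nonvanishing of extended columns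
  have hεC : ((ε : ℝ) : ℂ) ≠ 0 := by rcases hε with h | h <;> rw [h] <;> norm_num
  have hGneL : ∀ j ≤ n, Gf n ε Y j ≠ 0 := by
    intro j hj; rw [Gf]; split
    · exact hYne j
    · exact mul_ne_zero hεC (hYne 0)
  have hGneT : ∀ j ≤ n, Gf n ε Yt j ≠ 0 := by
    intro j hj; rw [Gf]; split
    · next h => exact hWneT j h
    · exact mul_ne_zero hεC (hWneT 0 hn0)
  -- components in terms of representatives
  have hconjYt : ∀ j, (starRingEnd ℂ) (Yt j) = ty j := by
    intro j; rw [hYtdef]; exact Complex.conj_conj _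
  have hT : ∀ j < n, (P (j : ℤ)).1 = Y j * (starRingEnd ℂ) (Yt j) := by
    intro j hj
    rw [hconjYt j]
    simp only [htydef]
    rw [mul_div_cancel₀ _ (hYne j)]
  have hO : ∀ j < n, (P (j : ℤ)).2 = (starRingEnd ℂ) (Y j) * (starRingEnd ℂ) (Yt j) := by
    intro j hj
    rw [hconjYt j]
    apply mul_right_cancel₀ (hYne j)
    rw [← hrepY j hj]
    simp only [htydef]
    rw [mul_assoc, div_mul_cancel₀ _ (hYne j)]
  have hTG : ∀ j ≤ n, (P (j : ℤ)).1 = Gf n ε Y j * (starRingEnd ℂ) (Gf n ε Yt j) := by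
    intro j hj
    rcases lt_or_eq_of_le hj with hj' | hj'
    · rw [Gf, Gf, if_pos hj', if_pos hj']
      exact hT j hj'
    · rw [hj']
      rw [Gf, Gf, if_neg (lt_irrefl n), if_neg (lt_irrefl n), map_mul, Complex.conj_ofReal]
      rw [show ((n : ℕ) : ℤ) = (0 : ℤ) + (n : ℕ) by push_cast; ring, hper 0]
      have h0 := hT 0 hn0
      push_cast at h0 ⊢
      rw [h0, show ((ε : ℂ) * Y 0 * ((ε : ℂ) * (starRingEnd ℂ) (Yt 0)))
        = ((ε * ε : ℝ) : ℂ) * (Y 0 * (starRingEnd ℂ) (Yt 0)) by push_cast; ring, hεε]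
      norm_num
  -- the winding relation
  have hargsum : wind ε lam - wind ε lat = -(2 * Real.pi) := by
    rw [hwindL, hwindT, ← Finset.sum_sub_distrib, ← hwind]
    apply Finset.sum_congr rfl
    intro i hi
    rw [Finset.mem_range] at hi
    rw [show ((i : ℤ) + 1) = ((i + 1 : ℕ) : ℤ) by push_cast; ring]
    exact (arg_sub_arg (hGneL i (by omega)) (hGneL (i + 1) (by omega)) (hGneT i (by omega))
      (hGneT (i + 1) (by omega)) (hTG i (by omega)) (hTG (i + 1) (by omega))
      (hargL i hi).1 (hargL i hi).2 (hargT i hi).1 (hargT i hi).2).symm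
  have hmt2 : mt = m + 2 := by
    have h2 : (m : ℝ) * Real.pi - (mt : ℝ) * Real.pi = -(2 * Real.pi) := by
      rw [← hmx, ← hmtx]; exact hargsum
    have h3 : ((mt : ℝ) - (m : ℝ) - 2) * Real.pi = 0 := by linarith
    have h4 := (mul_eq_zero.mp h3).resolve_right hpi.ne'
    have h5 : (mt : ℝ) = (m : ℝ) + 2 := by linarith
    exact_mod_cast h5
  have hmtn : mt < (n : ℤ) := by
    have h1 : (mt : ℝ) * Real.pi < (n : ℝ) * Real.pi := by
      rw [← hmtx, hwindT]
      calc ∑ i ∈ Finset.range n, (Gf n ε Yt (i + 1) / Gf n ε Yt i).arg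
          < ∑ _i ∈ Finset.range n, Real.pi :=
            Finset.sum_lt_sum_of_nonempty ⟨0, Finset.mem_range.2 hn0⟩
              (fun i hi => (hargT i (Finset.mem_range.1 hi)).2)
        _ = (n : ℝ) * Real.pi := by
            rw [Finset.sum_const, Finset.card_range, nsmul_eq_mul]
    have h2 : (mt : ℝ) < (n : ℝ) := lt_of_mul_lt_mul_right (by linarith) hpi.le
    exact_mod_cast h2
  -- the degree k
  set k : ℕ := m.toNat + 1 with hkdef
  have hkZ : (k : ℤ) = m + 1 := by rw [hkdef]; push_cast [Int.toNat_of_nonneg hm0.le]; ring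
  have hk2 : 2 ≤ k := by omega
  have hkn : k ≤ n - 2 := by omega
  have hsgn : sgn (k : ℤ) = ε := by
    rw [sgn, show (k : ℤ) - 1 = m by omega]; exact hmε
  have hkR : (k : ℝ) = (m : ℝ) + 1 := by exact_mod_cast hkZ
  have hmtR : (mt : ℝ) = (k : ℝ) + 1 := by rw [hkR]; push_cast [hmt2]; ring
  -- λ⁺ and λ̃⁺ membership
  have hlamPlus : lamPlus n (k : ℤ) lam := by
    unfold lamPlus
    rw [hsgn]
    refine ⟨hbrL, ?_⟩
    rw [hmx]
    push_cast
    rw [hkR]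
    ring
  have hlatPlus : latPlus n (k : ℤ) lat := by
    unfold latPlus
    rw [hsgn]
    exact ⟨hbrT, by rw [hmtx, hmtR]; push_cast; ring⟩
  -- entries of the matrices
  have hlam0 : ∀ j : Fin n, lam 0 j = (Y (j : ℕ)).re := by
    intro j; rw [hlamdef]; simp [Matrix.of_apply]
  have hlam1 : ∀ j : Fin n, lam 1 j = (Y (j : ℕ)).im := by
    intro j; rw [hlamdef]
    show (if (1 : Fin 2) = 0 then (Y (j : ℕ)).re else (Y (j : ℕ)).im) = (Y (j : ℕ)).im
    rw [if_neg (by decide)]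
  have hlat0 : ∀ j : Fin n, lat 0 j = (Yt (j : ℕ)).re := by
    intro j; rw [hlatdef]; simp [Matrix.of_apply]
  have hlat1 : ∀ j : Fin n, lat 1 j = (Yt (j : ℕ)).im := by
    intro j; rw [hlatdef]
    show (if (1 : Fin 2) = 0 then (Yt (j : ℕ)).re else (Yt (j : ℕ)).im) = (Yt (j : ℕ)).im
    rw [if_neg (by decide)]
  -- momentum conservation
  have hsum1 : ∑ j : Fin n, (P ((j : ℕ) : ℤ)).1 = 0 := by
    have h := congrArg Prod.fst hsum
    rw [Prod.fst_sum, Finset.sum_range (fun i => (P (i : ℤ)).1)] at h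
    simpa using h
  have hsum2 : ∑ j : Fin n, (P ((j : ℕ) : ℤ)).2 = 0 := by
    have h := congrArg Prod.snd hsum
    rw [Prod.snd_sum, Finset.sum_range (fun i => (P (i : ℤ)).2)] at h
    simpa using h
  have hkey : ∀ j : Fin n,
      ((Y (j : ℕ)).re * (Yt (j : ℕ)).re = ((P ((j : ℕ) : ℤ)).1.re + (P ((j : ℕ) : ℤ)).2.re) / 2) ∧
      ((Y (j : ℕ)).im * (Yt (j : ℕ)).im = ((P ((j : ℕ) : ℤ)).1.re - (P ((j : ℕ) : ℤ)).2.re) / 2) ∧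
      ((Y (j : ℕ)).im * (Yt (j : ℕ)).re = ((P ((j : ℕ) : ℤ)).1.im - (P ((j : ℕ) : ℤ)).2.im) / 2) ∧
      ((Y (j : ℕ)).re * (Yt (j : ℕ)).im = -((P ((j : ℕ) : ℤ)).1.im + (P ((j : ℕ) : ℤ)).2.im) / 2) := by
    intro j
    rw [hT (j : ℕ) j.isLt, hO (j : ℕ) j.isLt]
    simp only [Complex.mul_re, Complex.mul_im, Complex.conj_re, Complex.conj_im]
    refine ⟨by ring, by ring, by ring, by ring⟩
  have hmom : lam * lat.transpose = 0 := by
    ext r s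
    rw [Matrix.mul_apply, Matrix.zero_apply]
    simp only [Matrix.transpose_apply]
    fin_cases r <;> fin_cases s
    · calc ∑ j : Fin n, lam 0 j * lat 0 j
          = ∑ j : Fin n, ((P ((j : ℕ) : ℤ)).1.re + (P ((j : ℕ) : ℤ)).2.re) / 2 :=
            Finset.sum_congr rfl fun j _ => by rw [hlam0 j, hlat0 j, (hkey j).1]
        _ = 0 := by
            rw [← Finset.sum_div, Finset.sum_add_distrib, ← Complex.re_sum, ← Complex.re_sum,
              hsum1, hsum2]
            simp
    · calc ∑ j : Fin n, lam 0 j * lat 1 j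
          = ∑ j : Fin n, -((P ((j : ℕ) : ℤ)).1.im + (P ((j : ℕ) : ℤ)).2.im) / 2 :=
            Finset.sum_congr rfl fun j _ => by rw [hlam0 j, hlat1 j, (hkey j).2.2.2]
        _ = 0 := by
            rw [← Finset.sum_div, Finset.sum_neg_distrib, Finset.sum_add_distrib,
              ← Complex.im_sum, ← Complex.im_sum, hsum1, hsum2]
            simp
    · calc ∑ j : Fin n, lam 1 j * lat 0 j
          = ∑ j : Fin n, ((P ((j : ℕ) : ℤ)).1.im - (P ((j : ℕ) : ℤ)).2.im) / 2 :=
            Finset.sum_congr rfl fun j _ => by rw [hlam1 j, hlat0 j, (hkey j).2.2.1]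
        _ = 0 := by
            rw [← Finset.sum_div, Finset.sum_sub_distrib, ← Complex.im_sum, ← Complex.im_sum,
              hsum1, hsum2]
            simp
    · calc ∑ j : Fin n, lam 1 j * lat 1 j
          = ∑ j : Fin n, ((P ((j : ℕ) : ℤ)).1.re - (P ((j : ℕ) : ℤ)).2.re) / 2 :=
            Finset.sum_congr rfl fun j _ => by rw [hlam1 j, hlat1 j, (hkey j).2.1]
        _ = 0 := by
            rw [← Finset.sum_div, Finset.sum_sub_distrib, ← Complex.re_sum, ← Complex.re_sum,
              hsum1, hsum2]
            simp
  -- the polygon property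
  have hpoly : ∀ j : Fin n, P ((j : ℕ) : ℤ) =
      ((lam 0 j + lam 1 j * Complex.I) * (lat 0 j - lat 1 j * Complex.I),
        (starRingEnd ℂ) (lam 0 j + lam 1 j * Complex.I) *
          (lat 0 j - lat 1 j * Complex.I)) := by
    intro j
    have h1 : ((lam 0 j : ℝ) : ℂ) + ((lam 1 j : ℝ) : ℂ) * Complex.I = Y (j : ℕ) := by
      rw [hlam0 j, hlam1 j]; exact Complex.re_add_im _
    have h2 : ((lat 0 j : ℝ) : ℂ) - ((lat 1 j : ℝ) : ℂ) * Complex.I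
        = (starRingEnd ℂ) (Yt (j : ℕ)) := by
      rw [hlat0 j, hlat1 j]
      apply Complex.ext <;> simp
    rw [h1, h2]
    exact Prod.ext_iff.mpr ⟨hT (j : ℕ) j.isLt, hO (j : ℕ) j.isLt⟩
  refine ⟨k, ⟨hk2, hkn, lam, lat, ⟨hlamPlus, hlatPlus, hmom⟩, hpoly⟩, ?_⟩
  rintro k' ⟨hk'2, hk'n, lam', lat', ⟨hlamP', hlatP', hmom'⟩, hpoly'⟩
  set ε' : ℝ := sgn (k' : ℤ) with hε'def
  have hε' : ε' = 1 ∨ ε' = -1 := sgn_pm _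
  set W' : ℕ → ℂ := fun j => if h : j < n then cnum lam' ⟨j, h⟩ else 1 with hW'def
  have hWA' : ∀ (j : ℕ) (h : j < n), cnum lam' ⟨j, h⟩ = W' j := by
    intro j h
    simp only [hW'def]
    rw [dif_pos h]
  have hp1' : ∀ j, j + 1 < n → 0 < ((starRingEnd ℂ) (W' j) * W' (j + 1)).im := by
    intro j hj
    have h := hlamP'.1 j (Finset.mem_range.2 (by omega))
    rw [← hε'def] at h
    rwa [brkt_eq ε' lam' (by omega) hj, hWA' j (by omega), hWA' (j + 1) hj] at h
  have hp2' : 0 < ((starRingEnd ℂ) (W' (n - 1)) * (((ε' : ℝ) : ℂ) * W' 0)).im := by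
    have h := hlamP'.1 (n - 1) (Finset.mem_range.2 (by omega))
    rw [← hε'def] at h
    rw [brkt_last hn0 ε' lam', hWA' (n - 1) (by omega), hWA' 0 hn0] at h
    rw [im_real_mul]
    exact h
  obtain ⟨hWne', hbr', hwind', harg', hang'⟩ := windEq (by omega) hε' lam' W' hWA' hp1' hp2'
  have hrep' : ∀ (j : ℕ), j < n →
      (starRingEnd ℂ) (W' j) * (P (j : ℤ)).1 = (P (j : ℤ)).2 * W' j := by
    intro j h
    have hp := hpoly' ⟨j, h⟩
    have hcl : ((lam' 0 ⟨j, h⟩ : ℝ) : ℂ) + (lam' 1 ⟨j, h⟩ : ℝ) * Complex.I = W' j := by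
      rw [← hWA' j h]
      exact (Complex.mk_eq_add_mul_I _ _).symm
    obtain ⟨hp1c, hp2c⟩ := Prod.ext_iff.mp hp
    rw [hcl] at hp1c hp2c
    rw [hp1c, hp2c]
    ring
  have hcex : ∀ j : ℕ, ∃ cc : ℝ, j < n → (cc ≠ 0 ∧ W' j = (cc : ℂ) * Y j) := by
    intro j
    by_cases h : j < n
    · obtain ⟨cc, hc1, hc2⟩ :=
        ratio_real (hYne j) (hWne' j h) (hPT j h).1 (hrepY j h) (hrep' j h)
      exact ⟨cc, fun _ => ⟨hc1, hc2⟩⟩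
    · exact ⟨1, fun h' => absurd h' h⟩
  choose c hc using hcex
  have hscale : ∀ (a b : ℝ) (u v : ℂ),
      ((starRingEnd ℂ) ((a : ℂ) * u) * ((b : ℂ) * v)).im
        = a * b * ((starRingEnd ℂ) u * v).im := by
    intro a b u v
    rw [map_mul, Complex.conj_ofReal,
      show (a : ℂ) * (starRingEnd ℂ) u * ((b : ℂ) * v)
        = ((a * b : ℝ) : ℂ) * ((starRingEnd ℂ) u * v) by push_cast; ring]
    simp [Complex.mul_im]
  have hcc : ∀ j, j + 1 < n → 0 < c j * c (j + 1) := by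
    intro j hj
    have h1 := hp1' j hj
    rw [(hc j (by omega)).2, (hc (j + 1) hj).2, hscale] at h1
    nlinarith [hΔpos j hj]
  have hch : ∀ j, j < n → 0 < c 0 * c j := by
    intro j
    induction j with
    | zero => intro _; exact mul_self_pos.2 (hc 0 hn0).1
    | succ j ih =>
      intro hj
      have h1 := ih (by omega)
      have h2 := hcc j hj
      nlinarith [mul_pos h1 h2, sq_nonneg (c j)]
  have hεeq : ε' = ε := by
    have h1 := hp2'
    rw [im_real_mul, (hc (n - 1) (by omega)).2, (hc 0 hn0).2, hscale, ← hσdef] at h1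
    have h3 := hch (n - 1) (by omega)
    have h4 := hεσ
    rcases hε' with he' | he' <;> rcases hε with he | he
    · rw [he', he]
    · exfalso; rw [he'] at h1; rw [he] at h4; nlinarith
    · exfalso; rw [he'] at h1; rw [he] at h4; nlinarith
    · rw [he', he]
  set C : ℕ → ℝ := fun j => if j < n then c j else c 0 with hCdef
  have hCne : ∀ j ≤ n, C j ≠ 0 := by
    intro j hj
    rw [hCdef]
    dsimp only
    split
    · exact (hc j (by assumption)).1
    · exact (hc 0 hn0).1
  have hGC : ∀ j ≤ n, Gf n ε' W' j = ((C j : ℝ) : ℂ) * Gf n ε Y j := by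
    intro j hj
    rcases lt_or_eq_of_le hj with hj' | hj'
    · rw [Gf, Gf, if_pos hj', if_pos hj', hCdef]
      dsimp only
      rw [if_pos hj']
      exact (hc j hj').2
    · subst hj'
      rw [Gf, Gf, if_neg (lt_irrefl j), if_neg (lt_irrefl j), hCdef]
      dsimp only
      rw [if_neg (lt_irrefl j), (hc 0 hn0).2, hεeq]
      push_cast
      ring
  have hwindeq : wind ε' lam' = wind ε lam := by
    rw [hwind', hwindL]
    apply Finset.sum_congr rfl
    intro i hi
    rw [Finset.mem_range] at hi
    have hprod : 0 < C i * C (i + 1) := by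
      rcases Nat.lt_or_ge (i + 1) n with hi1 | hi1
      · rw [hCdef]
        dsimp only
        rw [if_pos hi, if_pos hi1]
        exact hcc i hi1
      · have he : i = n - 1 := by omega
        rw [hCdef]
        dsimp only
        rw [if_pos hi, if_neg (by omega : ¬ i + 1 < n), he]
        have := hch (n - 1) (by omega)
        nlinarith
    have hCi : C i ≠ 0 := hCne i (by omega)
    have hratio : 0 < C (i + 1) / C i := by
      have hsq : 0 < C i ^ 2 := pow_two_pos_of_ne_zero hCi
      have : C (i + 1) / C i = (C i * C (i + 1)) / C i ^ 2 := by
        field_simp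
      rw [this]
      exact div_pos hprod hsq
    have hGne : Gf n ε Y i ≠ 0 := hGneL i (by omega)
    rw [hGC (i + 1) (by omega), hGC i (by omega),
      show ((C (i + 1) : ℝ) : ℂ) * Gf n ε Y (i + 1) / (((C i : ℝ) : ℂ) * Gf n ε Y i)
        = ((C (i + 1) / C i : ℝ) : ℂ) * (Gf n ε Y (i + 1) / Gf n ε Y i) by
          push_cast
          field_simp,
      Complex.arg_real_mul _ hratio]
  have h2 := hlamPlus.2
  rw [hsgn] at h2
  have h1 := hlamP'.2
  rw [← hε'def, hwindeq, h2] at h1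
  have h3 := mul_right_cancel₀ hpi.ne' h1
  have h4 : ((k' : ℕ) : ℝ) = ((k : ℕ) : ℝ) := by push_cast at h3 ⊢; linarith
  exact_mod_cast h4
end
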